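/- Let 0 < k < n and 1 ≤ m < n. For every function f on the slice ([n] choose k) and every t ≥ 0, ‖H_t f − Π_T H_t f‖²_{L²} ≤ (1/(n−m)) Σ_{1 ≤ i < j ≤ n−m} ‖D_{τ_{ij}}(H_t f)‖²_{L²}, where all norms are with respect to the uniform measure on the slice. -/

import Mathlib

open Finset

/-- The slice `([n] choose k)` of the Boolean cube: points of `{0,1}ⁿ` with exactly `k` ones. -/
abbrev Slice (n k : ℕ) : Type :=
  { x : Fin n → Bool // (∑ l, (if x l then 1 else 0 : ℕ)) = k }

/-- The action of a permutation `σ` on the slice: `x^σ = (x_{σ(l)})_l`. -/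
def permAct {n k : ℕ} (σ : Equiv.Perm (Fin n)) (x : Slice n k) : Slice n k :=
  ⟨fun l => x.1 (σ l), (Fintype.sum_equiv σ _ _ fun l => rfl).trans x.2⟩

/-- `D_{τ_{ij}} f (x) = f(x^{τ_{ij}}) − f(x)`. -/
def sliceD {n k : ℕ} (i j : Fin n) (f : Slice n k → ℝ) (x : Slice n k) : ℝ :=
  f (permAct (Equiv.swap i j) x) - f x

/-- The `L¹` norm with respect to the uniform probability measure on the slice. -/
noncomputable def sliceL1 {n k : ℕ} (f : Slice n k → ℝ) : ℝ :=
  (Fintype.card (Slice n k) : ℝ)⁻¹ * ∑ x, |f x|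

/-- The square of the `L²` norm with respect to the uniform probability measure
on the slice. -/
noncomputable def sliceL2sq {n k : ℕ} (f : Slice n k → ℝ) : ℝ :=
  (Fintype.card (Slice n k) : ℝ)⁻¹ * ∑ x, (f x) ^ 2

/-- The influence `I_{τ_{ij}}(f) = ‖D_{τ_{ij}} f‖_{L¹}`. -/
noncomputable def sliceInfluence {n k : ℕ} (i j : Fin n) (f : Slice n k → ℝ) : ℝ :=
  sliceL1 (sliceD i j f)

/-- The total influence `Inf(f) = (1/n) Σ_{1 ≤ i < j ≤ n} I_{τ_{ij}}(f)`. -/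
noncomputable def sliceTotalInfluence {n k : ℕ} (f : Slice n k → ℝ) : ℝ :=
  (n : ℝ)⁻¹ * ∑ i : Fin n, ∑ j : Fin n, if i < j then sliceInfluence i j f else 0

/-- The generator `L f (x) = (2/(n(n−1))) Σ_{i<j} f(x^{τ_{ij}}) − f(x)` on the slice. -/
noncomputable def sliceGen (n k : ℕ) : (Slice n k → ℝ) →ₗ[ℝ] (Slice n k → ℝ) :=
  (2 / ((n : ℝ) * ((n : ℝ) - 1))) •
      (∑ i : Fin n, ∑ j : Fin n,
        if i < j then LinearMap.funLeft ℝ ℝ (permAct (Equiv.swap i j)) else 0) -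
    LinearMap.id

/-- `H_t = P_{(n−1)t/2}` where `P_s = e^{sL}` is the semigroup generated by `L`. -/
noncomputable def sliceH (n k : ℕ) (t : ℝ) : (Slice n k → ℝ) → (Slice n k → ℝ) :=
  fun f => NormedSpace.exp
    ((((n : ℝ) - 1) * t / 2) • (LinearMap.toContinuousLinearMap (sliceGen n k))) f

/-- `Π_T f (x) = (1/(n−m)!) Σ_{σ ∈ S_{n−m}} f(x^σ)`, the average of `f` over all
permutations of the first `n − m` coordinates. -/
noncomputable def slicePiT (n k m : ℕ) (f : Slice n k → ℝ) : Slice n k → ℝ :=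
  fun x => ((n - m).factorial : ℝ)⁻¹ *
    ∑ σ ∈ Finset.univ.filter
        (fun σ : Equiv.Perm (Fin n) => ∀ l : Fin n, n - m ≤ (l : ℕ) → σ l = l),
      f (permAct σ x)

namespace S8
variable {r : ℕ}

def cnt (y : Fin r → Bool) : ℕ := ∑ i, if y i then 1 else 0

def lvl (r a : ℕ) : Finset (Fin r → Bool) := Finset.univ.filter (fun y => cnt y = a)

lemma mem_lvl {a : ℕ} {y : Fin r → Bool} : y ∈ lvl r a ↔ cnt y = a := by
  simp [lvl]

def Dop (v : (Fin r → Bool) → ℝ) (w : Fin r → Bool) : ℝ :=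
  ∑ i, if w i = false then v (Function.update w i true) else 0

def Uop (v : (Fin r → Bool) → ℝ) (y : Fin r → Bool) : ℝ :=
  ∑ i, if y i = true then v (Function.update y i false) else 0

lemma cnt_update_true {w : Fin r → Bool} {i : Fin r} (h : w i = false) :
    cnt (Function.update w i true) = cnt w + 1 := by
  unfold cnt
  rw [← Finset.sum_erase_add _ _ (Finset.mem_univ i),
      ← Finset.sum_erase_add _ _ (Finset.mem_univ i)]
  have hs : ∑ j ∈ Finset.univ.erase i, (if Function.update w i true j then (1:ℕ) else 0)
      = ∑ j ∈ Finset.univ.erase i, (if w j then (1:ℕ) else 0) :=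
    Finset.sum_congr rfl fun j hj => by
      rw [Function.update_of_ne (Finset.ne_of_mem_erase hj)]
  rw [hs]; simp [h]

lemma cnt_update_false {y : Fin r → Bool} {i : Fin r} (h : y i = true) :
    cnt (Function.update y i false) + 1 = cnt y := by
  unfold cnt
  rw [← Finset.sum_erase_add _ _ (Finset.mem_univ i),
      ← Finset.sum_erase_add _ _ (Finset.mem_univ i)]
  have hs : ∑ j ∈ Finset.univ.erase i, (if Function.update y i false j then (1:ℕ) else 0)
      = ∑ j ∈ Finset.univ.erase i, (if y j then (1:ℕ) else 0) :=
    Finset.sum_congr rfl fun j hj => by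
      rw [Function.update_of_ne (Finset.ne_of_mem_erase hj)]
  rw [hs]; simp [h]

lemma cnt_le (y : Fin r → Bool) : cnt y ≤ r := by
  unfold cnt
  calc ∑ i, (if y i then 1 else 0) ≤ ∑ _i : Fin r, 1 :=
        Finset.sum_le_sum (fun i _ => by split <;> omega)
  _ = r := by simp


lemma pair_reindex (b : ℕ) (F : (Fin r → Bool) → Fin r → ℝ) :
    ∑ w ∈ lvl r b, ∑ i, (if w i = false then F w i else 0)
      = ∑ y ∈ lvl r (b+1), ∑ i, (if y i = true then F (Function.update y i false) i else 0) := by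
  rw [← Finset.sum_product', ← Finset.sum_product']
  rw [← Finset.sum_filter, ← Finset.sum_filter]
  refine Finset.sum_bij' (fun p _ => (Function.update p.1 p.2 true, p.2))
    (fun q _ => (Function.update q.1 q.2 false, q.2)) ?_ ?_ ?_ ?_ ?_
  · rintro ⟨w, i⟩ hp
    simp only [Finset.mem_filter, Finset.mem_product, mem_lvl, Finset.mem_univ, and_true,
      true_and] at hp ⊢
    exact ⟨by rw [cnt_update_true hp.2, hp.1], by simp⟩
  · rintro ⟨y, i⟩ hq
    simp only [Finset.mem_filter, Finset.mem_product, mem_lvl, Finset.mem_univ, and_true,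
      true_and] at hq ⊢
    refine ⟨by have := cnt_update_false hq.2; omega, by simp⟩
  · rintro ⟨w, i⟩ hp
    simp only [Finset.mem_filter, Finset.mem_product, mem_lvl, Finset.mem_univ, and_true,
      true_and] at hp
    simp [Function.update_idem, ← hp.2, Function.update_eq_self]
  · rintro ⟨y, i⟩ hq
    simp only [Finset.mem_filter, Finset.mem_product, mem_lvl, Finset.mem_univ, and_true,
      true_and] at hq
    simp [Function.update_idem, ← hq.2, Function.update_eq_self]
  · rintro ⟨w, i⟩ hp
    simp only [Finset.mem_filter, Finset.mem_product, mem_lvl, Finset.mem_univ, and_true,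
      true_and] at hp
    simp [Function.update_idem, ← hp.2, Function.update_eq_self]

lemma adj (b : ℕ) (v z : (Fin r → Bool) → ℝ) :
    ∑ w ∈ lvl r b, Dop v w * z w = ∑ y ∈ lvl r (b+1), v y * Uop z y := by
  have l1 : ∀ w, Dop v w * z w = ∑ i, (if w i = false then v (Function.update w i true) * z w else 0) := by
    intro w
    rw [Dop, Finset.sum_mul]
    exact Finset.sum_congr rfl fun i _ => by split <;> simp
  have l2 : ∀ y, v y * Uop z y = ∑ i, (if y i = true then v y * z (Function.update y i false) else 0) := by
    intro y
    rw [Uop, Finset.mul_sum]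
    exact Finset.sum_congr rfl fun i _ => by split <;> simp
  simp only [l1, l2]
  rw [pair_reindex b (fun w i => v (Function.update w i true) * z w)]
  refine Finset.sum_congr rfl fun y hy => Finset.sum_congr rfl fun i _ => ?_
  split
  · next h => rw [Function.update_idem, ← h, Function.update_eq_self]
  · rfl


def cntF (y : Fin r → Bool) : ℕ := ∑ i, if y i = false then 1 else 0

def mv (y : Fin r → Bool) (i j : Fin r) : Fin r → Bool :=
  Function.update (Function.update y i false) j true

def Sv (v : (Fin r → Bool) → ℝ) (y : Fin r → Bool) : ℝ :=
  ∑ i, ∑ j, if y i = true ∧ y j = false then v (mv y i j) else 0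

lemma cnt_add_cntF (y : Fin r → Bool) : cnt y + cntF y = r := by
  unfold cnt cntF
  rw [← Finset.sum_add_distrib]
  have : ∀ i : Fin r, ((if y i then (1:ℕ) else 0) + if y i = false then 1 else 0) = 1 := by
    intro i; cases h : y i <;> simp [h]
  simp [this]

lemma UDop_eq (v : (Fin r → Bool) → ℝ) (y : Fin r → Bool) :
    Uop (Dop v) y = (cnt y : ℝ) * v y + Sv v y := by
  have inner : ∀ i : Fin r, y i = true →
      Dop v (Function.update y i false)
        = v y + ∑ j, (if y j = false then v (mv y i j) else 0) := by
    intro i hi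
    rw [Dop, ← Finset.sum_erase_add _ _ (Finset.mem_univ i)]
    have h1 : (if Function.update y i false i = false then
        v (Function.update (Function.update y i false) i true) else 0) = v y := by
      simp [Function.update_idem, ← hi, Function.update_eq_self]
    rw [h1]
    have h2 : ∑ j ∈ Finset.univ.erase i,
          (if Function.update y i false j = false then
            v (Function.update (Function.update y i false) j true) else 0)
        = ∑ j ∈ Finset.univ.erase i, (if y j = false then v (mv y i j) else 0) := by
      refine Finset.sum_congr rfl fun j hj => ?_
      rw [Function.update_of_ne (Finset.ne_of_mem_erase hj)]; rfl
    rw [h2, Finset.sum_erase _ (by simp [hi])]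
    ring
  unfold Uop
  have : ∀ i : Fin r, (if y i = true then Dop v (Function.update y i false) else 0)
      = (if y i = true then v y else 0)
        + ∑ j, (if y i = true ∧ y j = false then v (mv y i j) else 0) := by
    intro i
    by_cases hi : y i = true
    · simp only [hi, if_true, inner i hi, true_and]
    · simp [hi]
  rw [Finset.sum_congr rfl (fun i _ => this i), Finset.sum_add_distrib]
  congr 1
  · have : ∀ i : Fin r, (if y i = true then v y else 0) = (if y i then (1:ℝ) else 0) * v y := by
      intro i; split <;> simp
    rw [Finset.sum_congr rfl (fun i _ => this i), ← Finset.sum_mul]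
    congr 1
    unfold cnt; push_cast [apply_ite (Nat.cast : ℕ → ℝ)]; rfl

lemma DUop_eq (v : (Fin r → Bool) → ℝ) (y : Fin r → Bool) :
    Dop (Uop v) y = (cntF y : ℝ) * v y + Sv v y := by
  have inner : ∀ j : Fin r, y j = false →
      Uop v (Function.update y j true)
        = v y + ∑ i, (if y i = true then v (mv y i j) else 0) := by
    intro j hj
    rw [Uop, ← Finset.sum_erase_add _ _ (Finset.mem_univ j)]
    have h1 : (if Function.update y j true j = true then
        v (Function.update (Function.update y j true) j false) else 0) = v y := by
      simp [Function.update_idem, ← hj, Function.update_eq_self]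
    rw [h1]
    have h2 : ∑ i ∈ Finset.univ.erase j,
          (if Function.update y j true i = true then
            v (Function.update (Function.update y j true) i false) else 0)
        = ∑ i ∈ Finset.univ.erase j, (if y i = true then v (mv y i j) else 0) := by
      refine Finset.sum_congr rfl fun i hi => ?_
      rw [Function.update_of_ne (Finset.ne_of_mem_erase hi)]
      by_cases h : y i = true
      · simp only [h, if_true]
        congr 1
        rw [mv, Function.update_comm (Finset.ne_of_mem_erase hi)]
      · simp [h]
    rw [h2, Finset.sum_erase _ (by simp [hj])]
    ring
  unfold Dop
  have : ∀ j : Fin r, (if y j = false then Uop v (Function.update y j true) else 0)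
      = (if y j = false then v y else 0)
        + ∑ i, (if y i = true ∧ y j = false then v (mv y i j) else 0) := by
    intro j
    by_cases hj : y j = false
    · simp only [hj, if_true, inner j hj, and_true]
    · simp [hj]
  rw [Finset.sum_congr rfl (fun j _ => this j), Finset.sum_add_distrib]
  congr 1
  · have : ∀ j : Fin r, (if y j = false then v y else 0) = (if y j = false then (1:ℝ) else 0) * v y := by
      intro j; split <;> simp
    rw [Finset.sum_congr rfl (fun j _ => this j), ← Finset.sum_mul]
    congr 1
    unfold cntF; push_cast [apply_ite (Nat.cast : ℕ → ℝ)]; rfl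
  · rw [Sv, Finset.sum_comm]


lemma Uop_one (y : Fin r → Bool) : Uop (fun _ => (1:ℝ)) y = (cnt y : ℝ) := by
  unfold Uop cnt
  push_cast [apply_ite (Nat.cast : ℕ → ℝ)]
  exact Finset.sum_congr rfl fun i _ => by cases h : y i <;> simp [h]

lemma sum_Dop (b : ℕ) (v : (Fin r → Bool) → ℝ) :
    ∑ w ∈ lvl r b, Dop v w = (b+1 : ℝ) * ∑ y ∈ lvl r (b+1), v y := by
  have := adj b v (fun _ => (1:ℝ))
  simp only [mul_one, Uop_one] at this
  rw [this, Finset.mul_sum]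
  refine Finset.sum_congr rfl fun y hy => ?_
  rw [mem_lvl.mp hy]; push_cast; ring

lemma lvl_zero : lvl r 0 = {fun _ => false} := by
  ext y
  simp only [mem_lvl, Finset.mem_singleton]
  constructor
  · intro h
    funext i
    have h2 := Finset.sum_eq_zero_iff.mp h i (Finset.mem_univ i)
    cases hh : y i
    · rfl
    · rw [hh] at h2; simp at h2
  · rintro rfl; simp [cnt]

lemma Dnorm_le : ∀ (a : ℕ) (v : (Fin r → Bool) → ℝ), (∑ y ∈ lvl r (a+1), v y) = 0 →
    ∑ w ∈ lvl r a, (Dop v w)^2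
      ≤ (a : ℝ) * ((r:ℝ) - (a+1)) * ∑ y ∈ lvl r (a+1), (v y)^2 := by
  intro a
  induction a with
  | zero =>
    intro v hv
    have h0 : ∑ w ∈ lvl r 0, Dop v w = 0 := by
      rw [sum_Dop 0 v, hv, mul_zero]
    rw [lvl_zero] at h0 ⊢
    simp only [Finset.sum_singleton] at h0 ⊢
    rw [h0]
    have : (0:ℝ) ≤ ∑ y ∈ lvl r 1, (v y)^2 := Finset.sum_nonneg fun y _ => sq_nonneg _
    simpa using by positivity
  | succ b IH =>
    intro v hv
    set a := b + 1 with ha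
    classical
    set W : (Fin r → Bool) → ℝ := fun w => if cnt w = a then Dop v w else 0 with hW
    have hWlvl : ∀ w ∈ lvl r a, W w = Dop v w := fun w hw => by
      simp [hW, mem_lvl.mp hw]
    set T : ℝ := ∑ w ∈ lvl r a, (Dop v w)^2 with hT
    have hTW : T = ∑ w ∈ lvl r a, W w * W w := by
      refine Finset.sum_congr rfl fun w hw => ?_
      rw [hWlvl w hw, sq]
    have hTnn : 0 ≤ T := Finset.sum_nonneg fun w _ => sq_nonneg _
    set V2 : ℝ := ∑ y ∈ lvl r (a+1), (v y)^2 with hV2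
    have hV2nn : 0 ≤ V2 := Finset.sum_nonneg fun y _ => sq_nonneg _
    -- (s1) mean zero of W at level a
    have hWsum : ∑ w ∈ lvl r a, W w = 0 := by
      rw [Finset.sum_congr rfl hWlvl]
      have := sum_Dop a v
      rw [hv, mul_zero] at this
      exact this
    -- (s2) IH applied to W
    have hDW : ∑ w ∈ lvl r b, (Dop W w)^2
        ≤ (b:ℝ) * ((r:ℝ) - (b+1)) * ∑ w ∈ lvl r a, (W w)^2 := IH W hWsum
    have hWsq : ∑ w ∈ lvl r a, (W w)^2 = T := by
      rw [hTW]; exact Finset.sum_congr rfl fun w _ => sq _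
    rw [hWsq] at hDW
    -- (s3)
    have hUDW : ∑ w ∈ lvl r a, W w * Uop (Dop W) w ≤ (b:ℝ) * ((r:ℝ) - (b+1)) * T := by
      have := adj b W (Dop W)
      calc ∑ w ∈ lvl r a, W w * Uop (Dop W) w
          = ∑ w ∈ lvl r b, Dop W w * Dop W w := this.symm
        _ = ∑ w ∈ lvl r b, (Dop W w)^2 := Finset.sum_congr rfl fun w _ => (sq _).symm
        _ ≤ _ := hDW
    -- (s4) norm of Uop W
    have hNU : ∑ z ∈ lvl r (a+1), (Uop W z)^2 ≤ ((a:ℝ) * ((r:ℝ) - (a+1))) * T := by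
      have h1 : ∑ z ∈ lvl r (a+1), (Uop W z)^2
          = ∑ w ∈ lvl r a, Dop (Uop W) w * W w := by
        rw [adj a (Uop W) W]
        exact Finset.sum_congr rfl fun z _ => sq _
      have h2 : ∀ w ∈ lvl r a, Dop (Uop W) w * W w
          = W w * Uop (Dop W) w + ((r:ℝ) - 2*a) * (W w * W w) := by
        intro w hw
        have hc : cnt w = a := mem_lvl.mp hw
        have hcF : (cntF w : ℝ) = (r:ℝ) - a := by
          have := cnt_add_cntF w
          have : (cnt w : ℝ) + (cntF w : ℝ) = (r:ℝ) := by exact_mod_cast congrArg (Nat.cast : ℕ → ℝ) this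
          rw [hc] at this; linarith
        rw [DUop_eq W w, UDop_eq W w, hcF, hc]
        ring
      rw [h1, Finset.sum_congr rfl h2, Finset.sum_add_distrib, ← Finset.mul_sum, ← hTW]
      have : (a:ℝ) * ((r:ℝ) - (a+1)) = (b:ℝ) * ((r:ℝ) - (b+1)) + ((r:ℝ) - 2*a) := by
        rw [ha]; push_cast; ring
      rw [this, add_mul]
      exact add_le_add hUDW (le_refl _)
    -- (s5)
    have hTinner : T = ∑ y ∈ lvl r (a+1), v y * Uop W y := by
      rw [← adj a v W, hTW]
      exact Finset.sum_congr rfl fun w hw => by rw [hWlvl w hw]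
    -- (s6) Cauchy-Schwarz
    have hCS : T^2 ≤ V2 * ∑ z ∈ lvl r (a+1), (Uop W z)^2 := by
      rw [hTinner]
      exact Finset.sum_mul_sq_le_sq_mul_sq _ _ _
    show T ≤ (a:ℝ) * ((r:ℝ) - (a+1)) * V2
    rcases eq_or_lt_of_le hTnn with h0 | hTpos
    · rw [← h0]
      rcases Finset.eq_empty_or_nonempty (lvl r (a+1)) with he | ⟨y, hy⟩
      · rw [hV2, he, Finset.sum_empty, mul_zero]
      · have h2 := cnt_le y
        rw [mem_lvl.mp hy] at h2
        have har : (0:ℝ) ≤ (r:ℝ) - (a+1) := by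
          have : ((a:ℕ):ℝ) + 1 ≤ (r:ℝ) := by exact_mod_cast h2
          linarith
        have hann : (0:ℝ) ≤ (a:ℝ) := Nat.cast_nonneg a
        exact mul_nonneg (mul_nonneg hann har) hV2nn
    · have h1 : T * T ≤ ((a:ℝ) * ((r:ℝ) - (a+1)) * V2) * T := by
        calc T * T = T^2 := (sq T).symm
          _ ≤ V2 * ∑ z ∈ lvl r (a+1), (Uop W z)^2 := hCS
          _ ≤ V2 * (((a:ℝ) * ((r:ℝ) - (a+1))) * T) := by
              apply mul_le_mul_of_nonneg_left hNU hV2nn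
          _ = ((a:ℝ) * ((r:ℝ) - (a+1)) * V2) * T := by ring
      exact le_of_mul_le_mul_right h1 hTpos


lemma mv_ne {y : Fin r → Bool} {i j : Fin r} (hi : y i = true) (hj : y j = false) : i ≠ j := by
  intro h; rw [h, hj] at hi; exact Bool.false_ne_true hi

lemma comp_swap_eq_self {y : Fin r → Bool} {i j : Fin r} (h : y i = y j) :
    y ∘ (Equiv.swap i j) = y := by
  funext l
  simp only [Function.comp_apply, Equiv.swap_apply_def]
  split
  · next hl => rw [hl, h]
  · split
    · next hl => rw [hl, h]
    · rfl

lemma mv_apply_i {y : Fin r → Bool} {i j : Fin r} (hi : y i = true) (hj : y j = false) :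
    mv y i j i = false := by
  have hij := mv_ne hi hj
  rw [mv, Function.update_of_ne hij, Function.update_self]

lemma mv_apply_j {y : Fin r → Bool} {i j : Fin r} (hi : y i = true) (hj : y j = false) :
    mv y i j j = true := by rw [mv, Function.update_self]

lemma comp_swap_eq_mv {y : Fin r → Bool} {i j : Fin r} (hi : y i = true) (hj : y j = false) :
    y ∘ (Equiv.swap i j) = mv y i j := by
  funext l
  simp only [Function.comp_apply]
  by_cases h1 : l = i
  · subst h1; rw [Equiv.swap_apply_left, hj, mv_apply_i hi hj]
  · by_cases h2 : l = j
    · subst h2; rw [Equiv.swap_apply_right, hi, mv_apply_j hi hj]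
    · rw [Equiv.swap_apply_of_ne_of_ne h1 h2, mv, Function.update_of_ne h2,
        Function.update_of_ne h1]

lemma cnt_mv {y : Fin r → Bool} {i j : Fin r} (hi : y i = true) (hj : y j = false) :
    cnt (mv y i j) = cnt y := by
  have hij := mv_ne hi hj
  have h1 : Function.update y i false j = false := by
    rw [Function.update_of_ne (Ne.symm hij), hj]
  rw [mv, cnt_update_true h1, cnt_update_false hi]

lemma mv_mv {y : Fin r → Bool} {i j : Fin r} (hi : y i = true) (hj : y j = false) :
    mv (mv y i j) j i = y := by
  have hij := mv_ne hi hj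
  have h1 : Function.update y i false j = false := by
    rw [Function.update_of_ne (Ne.symm hij)]; exact hj
  have h2 : Function.update (Function.update y i false) j false = Function.update y i false :=
    Function.update_eq_self_iff.mpr h1.symm
  rw [mv, mv, Function.update_idem, h2, Function.update_idem]
  exact Function.update_eq_self_iff.mpr hi.symm

lemma sum_ite_one_true (y : Fin r → Bool) :
    (∑ i, if y i = true then (1:ℝ) else 0) = (cnt y : ℝ) := by
  unfold cnt; push_cast [apply_ite (Nat.cast : ℕ → ℝ)]
  exact Finset.sum_congr rfl fun i _ => by cases h : y i <;> simp [h]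

lemma sum_ite_one_false (y : Fin r → Bool) :
    (∑ i, if y i = false then (1:ℝ) else 0) = (cntF y : ℝ) := by
  unfold cntF; push_cast [apply_ite (Nat.cast : ℕ → ℝ)]; rfl

lemma sum_ite_const_mul {p : Fin r → Prop} [DecidablePred p] (c : ℝ) :
    (∑ i, if p i then c else 0) = (∑ i, if p i then (1:ℝ) else 0) * c := by
  rw [Finset.sum_mul]
  exact Finset.sum_congr rfl fun i _ => by split <;> simp

lemma pack (s : Finset (Fin r → Bool)) (f : (Fin r → Bool) → Fin r → Fin r → ℝ) :
    (∑ y ∈ s, ∑ i, ∑ j, if (y i = true ∧ y j = false) then f y i j else 0)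
      = ∑ p ∈ ((s ×ˢ ((Finset.univ : Finset (Fin r)) ×ˢ (Finset.univ : Finset (Fin r)))).filter
          (fun p : (Fin r → Bool) × Fin r × Fin r => p.1 p.2.1 = true ∧ p.1 p.2.2 = false)),
          f p.1 p.2.1 p.2.2 := by
  rw [Finset.sum_filter, Finset.sum_product]
  exact Finset.sum_congr rfl fun y _ => by rw [Finset.sum_product]

lemma cnt_comp_swap (y : Fin r → Bool) (i j : Fin r) :
    cnt (y ∘ (Equiv.swap i j)) = cnt y := by
  unfold cnt
  exact Fintype.sum_equiv (Equiv.swap i j) _ _ fun l => rfl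

lemma core (a : ℕ) (u : (Fin r → Bool) → ℝ) (hu : ∑ y ∈ lvl r a, u y = 0) :
    (r:ℝ) * ∑ y ∈ lvl r a, (u y)^2
      ≤ ∑ i : Fin r, ∑ j : Fin r,
          if i < j then (∑ y ∈ lvl r a, (u (y ∘ (Equiv.swap i j)) - u y)^2) else 0 := by
  classical
  -- rewrite RHS as a sum over y of ordered-pair sums
  have hswap : (∑ i : Fin r, ∑ j : Fin r,
        if i < j then (∑ y ∈ lvl r a, (u (y ∘ (Equiv.swap i j)) - u y)^2) else 0)
      = ∑ y ∈ lvl r a, ∑ i, ∑ j,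
          if (y i = true ∧ y j = false) then (u (mv y i j) - u y)^2 else 0 := by
    have e1 : (∑ i : Fin r, ∑ j : Fin r,
          if i < j then (∑ y ∈ lvl r a, (u (y ∘ (Equiv.swap i j)) - u y)^2) else 0)
        = ∑ y ∈ lvl r a, ∑ i, ∑ j,
            if i < j then ((u (y ∘ (Equiv.swap i j)) - u y)^2) else 0 := by
      have : ∀ i j : Fin r, (if i < j then (∑ y ∈ lvl r a, (u (y ∘ (Equiv.swap i j)) - u y)^2) else 0)
          = ∑ y ∈ lvl r a, if i < j then ((u (y ∘ (Equiv.swap i j)) - u y)^2) else 0 := by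
        intro i j
        by_cases h : i < j
        · rw [if_pos h]; exact Finset.sum_congr rfl fun y _ => (if_pos h).symm
        · rw [if_neg h]; exact (Finset.sum_eq_zero fun y _ => if_neg h).symm
      simp only [this]
      exact (Finset.sum_congr rfl (fun i _ => Finset.sum_comm)).trans Finset.sum_comm
    rw [e1]
    refine Finset.sum_congr rfl fun y _ => ?_
    set A : Fin r → Fin r → ℝ :=
      fun i j => if (y i = true ∧ y j = false) then (u (mv y i j) - u y)^2 else 0 with hA
    have step1 : ∀ i j : Fin r, (if i < j then ((u (y ∘ (Equiv.swap i j)) - u y)^2) else 0)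
        = if i < j then (A i j + A j i) else 0 := by
      intro i j
      by_cases hlt : i < j
      · rw [if_pos hlt, if_pos hlt, hA]
        have hij : i ≠ j := ne_of_lt hlt
        cases hi : y i <;> cases hj : y j
        · rw [comp_swap_eq_self (hi.trans hj.symm)]
          simp [hi, hj]
        · rw [Equiv.swap_comm, comp_swap_eq_mv hj hi]
          simp [hi, hj]
        · rw [comp_swap_eq_mv hi hj]
          simp [hi, hj]
        · rw [comp_swap_eq_self (hi.trans hj.symm)]
          simp [hi, hj]
      · rw [if_neg hlt, if_neg hlt]
    simp only [step1]
    have step2 : ∀ i j : Fin r, (if i < j then (A i j + A j i) else 0)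
        = (if i < j then A i j else 0) + (if i < j then A j i else 0) := by
      intro i j; split <;> simp
    simp only [step2, Finset.sum_add_distrib]
    have step3 : (∑ i, ∑ j, if i < j then A j i else 0)
        = ∑ i, ∑ j, if j < i then A i j else 0 := Finset.sum_comm
    rw [step3, ← Finset.sum_add_distrib]
    refine Finset.sum_congr rfl fun i _ => ?_
    rw [← Finset.sum_add_distrib]
    refine Finset.sum_congr rfl fun j _ => ?_
    rcases lt_trichotomy i j with h | h | h
    · rw [if_pos h, if_neg (asymm h), add_zero]
    · subst h
      simp [hA]
    · rw [if_neg (asymm h), if_pos h, zero_add]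
  rw [hswap]
  set V : ℝ := ∑ y ∈ lvl r a, (u y)^2 with hV
  have hVnn : 0 ≤ V := Finset.sum_nonneg fun y _ => sq_nonneg _
  -- expand the square
  have hexp : (∑ y ∈ lvl r a, ∑ i, ∑ j,
        if (y i = true ∧ y j = false) then (u (mv y i j) - u y)^2 else 0)
      = (∑ y ∈ lvl r a, ∑ i, ∑ j,
          if (y i = true ∧ y j = false) then (u (mv y i j))^2 else 0)
        + (∑ y ∈ lvl r a, ∑ i, ∑ j,
          if (y i = true ∧ y j = false) then (u y)^2 else 0)
        - 2 * (∑ y ∈ lvl r a, ∑ i, ∑ j,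
          if (y i = true ∧ y j = false) then (u (mv y i j)) * u y else 0) := by
    have : ∀ (y : Fin r → Bool) (i j : Fin r),
        (if (y i = true ∧ y j = false) then (u (mv y i j) - u y)^2 else 0)
          = (if (y i = true ∧ y j = false) then (u (mv y i j))^2 else 0)
            + (if (y i = true ∧ y j = false) then (u y)^2 else 0)
            - 2 * (if (y i = true ∧ y j = false) then (u (mv y i j)) * u y else 0) := by
      intro y i j; split <;> ring
    simp only [this, Finset.sum_add_distrib, Finset.sum_sub_distrib, Finset.mul_sum]
  rw [hexp]
  -- Q2
  have hQ2 : (∑ y ∈ lvl r a, ∑ i, ∑ j,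
        if (y i = true ∧ y j = false) then (u y)^2 else 0)
      = (a:ℝ) * ((r:ℝ) - a) * V := by
    rw [hV, Finset.mul_sum]
    refine Finset.sum_congr rfl fun y hy => ?_
    have hc : cnt y = a := mem_lvl.mp hy
    have hcF : (cntF y : ℝ) = (r:ℝ) - a := by
      have h1 := cnt_add_cntF y
      have h2 : (cnt y : ℝ) + (cntF y : ℝ) = (r:ℝ) := by exact_mod_cast congrArg (Nat.cast : ℕ → ℝ) h1
      rw [hc] at h2; linarith
    have inner : ∀ i : Fin r, (∑ j, if (y i = true ∧ y j = false) then (u y)^2 else 0)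
        = if y i = true then ((cntF y : ℝ) * (u y)^2) else 0 := by
      intro i
      by_cases hi : y i = true
      · simp only [hi, true_and, if_pos]
        rw [sum_ite_const_mul ((u y)^2), sum_ite_one_false]
      · simp [hi]
    rw [Finset.sum_congr rfl fun i _ => inner i, sum_ite_const_mul ((cntF y : ℝ) * (u y)^2),
      sum_ite_one_true, hc, hcF]
    ring
  -- Q1 = Q2 by the involution (y,i,j) ↦ (mv y i j, j, i)
  have hQ1 : (∑ y ∈ lvl r a, ∑ i, ∑ j,
        if (y i = true ∧ y j = false) then (u (mv y i j))^2 else 0)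
      = (∑ y ∈ lvl r a, ∑ i, ∑ j,
        if (y i = true ∧ y j = false) then (u y)^2 else 0) := by
    rw [pack, pack]
    refine Finset.sum_bij' (fun p _ => ((mv p.1 p.2.1 p.2.2, (p.2.2, p.2.1)) :
        (Fin r → Bool) × Fin r × Fin r))
      (fun p _ => (mv p.1 p.2.1 p.2.2, (p.2.2, p.2.1))) ?_ ?_ ?_ ?_ ?_
    · rintro ⟨y, i, j⟩ hp
      simp only [Finset.mem_filter, Finset.mem_product, mem_lvl, Finset.mem_univ, and_true,
        true_and] at hp ⊢
      obtain ⟨hc, hi, hj⟩ := hp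
      exact ⟨by rw [cnt_mv hi hj, hc], mv_apply_j hi hj, mv_apply_i hi hj⟩
    · rintro ⟨y, i, j⟩ hp
      simp only [Finset.mem_filter, Finset.mem_product, mem_lvl, Finset.mem_univ, and_true,
        true_and] at hp ⊢
      obtain ⟨hc, hi, hj⟩ := hp
      exact ⟨by rw [cnt_mv hi hj, hc], mv_apply_j hi hj, mv_apply_i hi hj⟩
    · rintro ⟨y, i, j⟩ hp
      simp only [Finset.mem_filter, Finset.mem_product, mem_lvl, Finset.mem_univ, and_true,
        true_and] at hp
      obtain ⟨hc, hi, hj⟩ := hp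
      simp only
      rw [mv_mv hi hj]
    · rintro ⟨y, i, j⟩ hp
      simp only [Finset.mem_filter, Finset.mem_product, mem_lvl, Finset.mem_univ, and_true,
        true_and] at hp
      obtain ⟨hc, hi, hj⟩ := hp
      simp only
      rw [mv_mv hi hj]
    · rintro ⟨y, i, j⟩ hp
      rfl
  rw [hQ1, hQ2]
  -- the cross term
  rcases Nat.eq_zero_or_pos a with rfl | hapos
  · -- a = 0 : everything degenerates
    have hu0 : u (fun _ => false) = 0 := by
      rw [lvl_zero, Finset.sum_singleton] at hu; exact hu
    have hV0 : V = 0 := by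
      rw [hV, lvl_zero, Finset.sum_singleton, hu0]; ring
    have hQ3 : (∑ y ∈ lvl r 0, ∑ i, ∑ j,
          if (y i = true ∧ y j = false) then (u (mv y i j)) * u y else 0) = 0 := by
      rw [lvl_zero, Finset.sum_singleton]
      refine Finset.sum_eq_zero fun i _ => Finset.sum_eq_zero fun j _ => ?_
      simp
    rw [hQ3, hV0]
    simp
  · obtain ⟨b, rfl⟩ : ∃ b, a = b + 1 := ⟨a - 1, by omega⟩
    set a := b + 1 with ha
    have hQ3 : (∑ y ∈ lvl r a, ∑ i, ∑ j,
          if (y i = true ∧ y j = false) then (u (mv y i j)) * u y else 0)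
        = (∑ w ∈ lvl r b, (Dop u w)^2) - (a:ℝ) * V := by
      have hSv : ∀ y ∈ lvl r a, (∑ i, ∑ j,
            if (y i = true ∧ y j = false) then (u (mv y i j)) * u y else 0)
          = Sv u y * u y := by
        intro y _
        rw [Sv, Finset.sum_mul]
        refine Finset.sum_congr rfl fun i _ => ?_
        rw [Finset.sum_mul]
        exact Finset.sum_congr rfl fun j _ => by split <;> simp
      rw [Finset.sum_congr rfl hSv]
      have hSv2 : ∀ y ∈ lvl r a, Sv u y * u y
          = u y * Uop (Dop u) y - (a:ℝ) * (u y)^2 := by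
        intro y hy
        have := UDop_eq u y
        rw [mem_lvl.mp hy] at this
        have : Sv u y = Uop (Dop u) y - (a:ℝ) * u y := by rw [this]; ring
        rw [this]; ring
      rw [Finset.sum_congr rfl hSv2, Finset.sum_sub_distrib, ← adj b u (Dop u), hV,
        ← Finset.mul_sum]
      congr 1
      exact Finset.sum_congr rfl fun w _ => (sq _).symm
    rw [hQ3]
    have hDD : (∑ w ∈ lvl r b, (Dop u w)^2) ≤ (b:ℝ) * ((r:ℝ) - (b+1)) * V := by
      rw [hV]; exact Dnorm_le b u hu
    have hDDnn : 0 ≤ ∑ w ∈ lvl r b, (Dop u w)^2 := Finset.sum_nonneg fun w _ => sq_nonneg _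
    simp only [ha]
    push_cast
    nlinarith [hDD, hVnn, hDDnn]




variable {n k : ℕ}

/-- pointwise head-count split -/
lemma count_split (R : ℕ) (z : Fin n → Bool) :
    (∑ l, (if z l then 1 else 0 : ℕ))
      = (∑ l : Fin n, (if ((l:ℕ) < R ∧ z l = true) then 1 else 0 : ℕ))
        + ∑ l : Fin n, (if (¬ (l:ℕ) < R ∧ z l = true) then 1 else 0 : ℕ) := by
  rw [← Finset.sum_add_distrib]
  refine Finset.sum_congr rfl fun l _ => ?_
  by_cases h1 : (l:ℕ) < R <;> cases h2 : z l <;> simp [h1, h2]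

lemma head_count_eq (R : ℕ) {x x' : Slice n k}
    (htl : ∀ l : Fin n, R ≤ (l:ℕ) → x.1 l = x'.1 l) :
    (∑ l : Fin n, (if ((l:ℕ) < R ∧ x.1 l = true) then 1 else 0 : ℕ))
      = ∑ l : Fin n, (if ((l:ℕ) < R ∧ x'.1 l = true) then 1 else 0 : ℕ) := by
  have h1 := (count_split R x.1).symm.trans (x.2.trans (x'.2.symm.trans (count_split R x'.1)))
  have h2 : (∑ l : Fin n, (if (¬ (l:ℕ) < R ∧ x.1 l = true) then 1 else 0 : ℕ))
      = ∑ l : Fin n, (if (¬ (l:ℕ) < R ∧ x'.1 l = true) then 1 else 0 : ℕ) := by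
    refine Finset.sum_congr rfl fun l _ => ?_
    by_cases h : (l:ℕ) < R
    · simp [h]
    · rw [htl l (not_lt.mp h)]
  omega

lemma exists_rho (R : ℕ) (x x' : Slice n k)
    (htl : ∀ l : Fin n, R ≤ (l:ℕ) → x.1 l = x'.1 l) :
    ∃ ρ : Equiv.Perm (Fin n), (∀ l : Fin n, R ≤ (l:ℕ) → ρ l = l) ∧ permAct ρ x = x' := by
  classical
  set P : Fin n → Prop := fun l => (l:ℕ) < R with hP
  have hcard : ∀ (z : Slice n k) (b : Bool),
      Fintype.card {i : Subtype P // z.1 i.1 = b}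
        = ∑ l : Fin n, (if ((l:ℕ) < R ∧ z.1 l = b) then 1 else 0 : ℕ) := by
    intro z b
    rw [Fintype.card_congr (Equiv.subtypeSubtypeEquivSubtypeInter P (fun l => z.1 l = b)),
      Fintype.card_subtype, Finset.card_filter]
  have hct : Fintype.card {i : Subtype P // x'.1 i.1 = true}
      = Fintype.card {i : Subtype P // x.1 i.1 = true} := by
    rw [hcard, hcard]
    exact (head_count_eq R htl).symm
  have hcf : Fintype.card {i : Subtype P // ¬ x'.1 i.1 = true}
      = Fintype.card {i : Subtype P // ¬ x.1 i.1 = true} := by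
    have h1 : ∀ (z : Slice n k), Fintype.card {i : Subtype P // ¬ z.1 i.1 = true}
        = Fintype.card (Subtype P) - Fintype.card {i : Subtype P // z.1 i.1 = true} := by
      intro z
      have := Fintype.card_subtype_compl (fun i : Subtype P => z.1 i.1 = true)
      exact this
    rw [h1, h1, hct]
  let e_t : {i : Subtype P // x'.1 i.1 = true} ≃ {i : Subtype P // x.1 i.1 = true} :=
    Fintype.equivOfCardEq hct
  let e_f : {i : Subtype P // ¬ x'.1 i.1 = true} ≃ {i : Subtype P // ¬ x.1 i.1 = true} :=
    Fintype.equivOfCardEq hcf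
  let π : Equiv.Perm (Subtype P) :=
    ((Equiv.sumCompl (fun i : Subtype P => x'.1 i.1 = true)).symm.trans
      ((e_t.sumCongr e_f).trans (Equiv.sumCompl (fun i : Subtype P => x.1 i.1 = true))))
  have key : ∀ i : Subtype P, x.1 ((π i) : Fin n) = x'.1 i.1 := by
    intro i
    by_cases h : x'.1 i.1 = true
    · have h1 : π i = (e_t ⟨i, h⟩).1 := by
        simp only [π, Equiv.trans_apply, Equiv.sumCongr_apply]
        rw [Equiv.sumCompl_symm_apply_of_pos (p := fun i : Subtype P => x'.1 i.1 = true) (a := i) h]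
        rfl
      rw [h1, (e_t ⟨i, h⟩).2, h]
    · have h1 : π i = (e_f ⟨i, h⟩).1 := by
        simp only [π, Equiv.trans_apply, Equiv.sumCongr_apply]
        rw [Equiv.sumCompl_symm_apply_of_neg (p := fun i : Subtype P => x'.1 i.1 = true) (a := i) h]
        rfl
      have h2 := (e_f ⟨i, h⟩).2
      rw [h1]
      rw [Bool.not_eq_true] at h h2
      rw [h2, h]
  refine ⟨π.extendDomain (Equiv.refl (Subtype P)), fun l hl => ?_, ?_⟩
  · exact Equiv.Perm.extendDomain_apply_not_subtype π (Equiv.refl (Subtype P)) (not_lt.mpr hl)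
  · apply Subtype.ext
    funext l
    show x.1 (π.extendDomain (Equiv.refl (Subtype P)) l) = x'.1 l
    by_cases h : P l
    · rw [Equiv.Perm.extendDomain_apply_subtype π (Equiv.refl (Subtype P)) h]
      exact key ⟨l, h⟩
    · rw [Equiv.Perm.extendDomain_apply_not_subtype π (Equiv.refl (Subtype P)) h]
      exact htl l (not_lt.mp h)

lemma card_Hgrp (R : ℕ) (hRn : R ≤ n) :
    (Finset.univ.filter
        (fun σ : Equiv.Perm (Fin n) => ∀ l : Fin n, R ≤ (l : ℕ) → σ l = l)).card
      = R.factorial := by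
  classical
  rw [← Fintype.card_subtype]
  have e1 : {σ : Equiv.Perm (Fin n) // ∀ l : Fin n, R ≤ (l:ℕ) → σ l = l}
      ≃ {σ : Equiv.Perm (Fin n) // ∀ l : Fin n, ¬ ((l:ℕ) < R) → σ l = l} :=
    Equiv.subtypeEquivRight (fun σ => by
      constructor
      · intro h l hl; exact h l (not_lt.mp hl)
      · intro h l hl; exact h l (not_lt.mpr hl))
  have e2 := (Equiv.Perm.subtypeEquivSubtypePerm (fun l : Fin n => (l:ℕ) < R)).symm
  have e3 : {l : Fin n // (l:ℕ) < R} ≃ Fin R :=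
    { toFun := fun l => ⟨(l.1 : ℕ), l.2⟩
      invFun := fun i => ⟨⟨(i : ℕ), lt_of_lt_of_le i.2 hRn⟩, i.2⟩
      left_inv := fun l => by ext; rfl
      right_inv := fun i => by ext; rfl }
  rw [Fintype.card_congr (e1.trans (e2.trans (Equiv.permCongr e3)))]
  rw [Fintype.card_perm, Fintype.card_fin]


/-- the tail fiber map -/
def tl (R : ℕ) (x : Slice n k) : Fin n → Bool := fun l => if R ≤ (l:ℕ) then x.1 l else false

def Cls (R : ℕ) (τ : Fin n → Bool) : Finset (Slice n k) :=
  Finset.univ.filter (fun x => tl R x = τ)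

lemma tails_eq_of_mem {R : ℕ} {τ : Fin n → Bool} {x x' : Slice n k}
    (hx : x ∈ Cls R τ) (hx' : x' ∈ Cls R τ) :
    ∀ l : Fin n, R ≤ (l:ℕ) → x.1 l = x'.1 l := by
  intro l hl
  have h1 : tl R x = τ := (Finset.mem_filter.mp hx).2
  have h2 : tl R x' = τ := (Finset.mem_filter.mp hx').2
  have := (congrFun h1 l).trans (congrFun h2 l).symm
  rwa [tl, tl, if_pos hl, if_pos hl] at this

lemma permAct_permAct (σ ρ : Equiv.Perm (Fin n)) (x : Slice n k) :
    permAct σ (permAct ρ x) = permAct (σ.trans ρ) x := rfl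

lemma permAct_mem_Cls {R : ℕ} {τ : Fin n → Bool} {x : Slice n k} {σ : Equiv.Perm (Fin n)}
    (hσ : ∀ l : Fin n, R ≤ (l:ℕ) → σ l = l) (hx : x ∈ Cls R τ) :
    permAct σ x ∈ Cls R τ := by
  have h1 : tl R x = τ := (Finset.mem_filter.mp hx).2
  refine Finset.mem_filter.mpr ⟨Finset.mem_univ _, ?_⟩
  rw [← h1]
  funext l
  by_cases hl : R ≤ (l:ℕ)
  · rw [tl, tl, if_pos hl, if_pos hl]
    show x.1 (σ l) = x.1 l
    rw [hσ l hl]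
  · rw [tl, tl, if_neg hl, if_neg hl]

lemma piT_eq_of_rho (m : ℕ) (g : Slice n k → ℝ) {x x' : Slice n k} {ρ : Equiv.Perm (Fin n)}
    (hρ : ∀ l : Fin n, n - m ≤ (l:ℕ) → ρ l = l) (hx : permAct ρ x = x') :
    slicePiT n k m g x' = slicePiT n k m g x := by
  unfold slicePiT
  congr 1
  refine Finset.sum_bij' (fun σ _ => σ.trans ρ) (fun σ _ => σ.trans ρ.symm) ?_ ?_ ?_ ?_ ?_
  · intro σ hσ
    simp only [Finset.mem_filter, Finset.mem_univ, true_and] at hσ ⊢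
    intro l hl
    show ρ (σ l) = l
    rw [hσ l hl, hρ l hl]
  · intro σ hσ
    simp only [Finset.mem_filter, Finset.mem_univ, true_and] at hσ ⊢
    intro l hl
    show ρ.symm (σ l) = l
    rw [hσ l hl]
    have := hρ l hl
    conv_lhs => rw [← this]
    exact Equiv.symm_apply_apply ρ l
  · intro σ _; ext l; simp
  · intro σ _; ext l; simp
  · intro σ _
    rw [← hx, permAct_permAct]

lemma piT_const_on_cls (m : ℕ) (g : Slice n k → ℝ) {τ : Fin n → Bool} {x x' : Slice n k}
    (hx : x ∈ Cls (n - m) τ) (hx' : x' ∈ Cls (n - m) τ) :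
    slicePiT n k m g x = slicePiT n k m g x' := by
  obtain ⟨ρ, hρ, hact⟩ := exists_rho (n - m) x x' (tails_eq_of_mem hx hx')
  exact (piT_eq_of_rho m g hρ hact).symm

lemma sum_permAct_cls {R : ℕ} {τ : Fin n → Bool} (g : Slice n k → ℝ) {σ : Equiv.Perm (Fin n)}
    (hσ : ∀ l : Fin n, R ≤ (l:ℕ) → σ l = l) :
    ∑ x ∈ Cls R τ, g (permAct σ x) = ∑ x ∈ Cls R τ, g x := by
  have hσ' : ∀ l : Fin n, R ≤ (l:ℕ) → σ.symm l = l := by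
    intro l hl
    conv_lhs => rw [← hσ l hl]
    exact Equiv.symm_apply_apply σ l
  refine Finset.sum_bij' (fun x _ => permAct σ x) (fun x _ => permAct σ.symm x)
    (fun x hx => permAct_mem_Cls hσ hx) (fun x hx => permAct_mem_Cls hσ' hx) ?_ ?_ ?_
  · intro x _
    apply Subtype.ext; funext l
    show x.1 (σ (σ.symm l)) = x.1 l
    rw [Equiv.apply_symm_apply]
  · intro x _
    apply Subtype.ext; funext l
    show x.1 (σ.symm (σ l)) = x.1 l
    rw [Equiv.symm_apply_apply]
  · intro x _; rfl

lemma sum_piT_cls (m : ℕ) (hmn : m ≤ n) (g : Slice n k → ℝ) (τ : Fin n → Bool) :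
    ∑ x ∈ Cls (n - m) τ, slicePiT n k m g x = ∑ x ∈ Cls (n - m) τ, g x := by
  unfold slicePiT
  rw [← Finset.mul_sum, Finset.sum_comm]
  have h1 : ∀ σ ∈ Finset.univ.filter
      (fun σ : Equiv.Perm (Fin n) => ∀ l : Fin n, n - m ≤ (l : ℕ) → σ l = l),
      ∑ x ∈ Cls (n - m) τ, g (permAct σ x) = ∑ x ∈ Cls (n - m) τ, g x := by
    intro σ hσ
    exact sum_permAct_cls g (by simpa using (Finset.mem_filter.mp hσ).2)
  rw [Finset.sum_congr rfl h1, Finset.sum_const, card_Hgrp (n - m) (Nat.sub_le n m),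
    nsmul_eq_mul, ← mul_assoc, inv_mul_cancel₀, one_mul]
  exact_mod_cast Nat.factorial_ne_zero (n - m)


def hd (hrn : r ≤ n) (x : Slice n k) : Fin r → Bool := fun i => x.1 (Fin.castLE hrn i)

def glf (x₀ : Slice n k) (y : Fin r → Bool) : Fin n → Bool :=
  fun l => if h : (l:ℕ) < r then y ⟨(l:ℕ), h⟩ else x₀.1 l

lemma sum_split' {M : Type*} [AddCommMonoid M] (hrn : r ≤ n) (G : Fin n → M) :
    ∑ l : Fin n, G l
      = (∑ i : Fin r, G (Fin.castLE hrn i))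
        + ∑ l ∈ Finset.univ.filter (fun l : Fin n => ¬ (l:ℕ) < r), G l := by
  rw [← Finset.sum_filter_add_sum_filter_not Finset.univ (fun l : Fin n => (l:ℕ) < r)]
  congr 1
  refine Finset.sum_bij' (fun l hl => (⟨(l:ℕ), by simpa using hl⟩ : Fin r))
    (fun i _ => Fin.castLE hrn i) ?_ ?_ ?_ ?_ ?_
  · intro i _; exact Finset.mem_univ _
  · intro i _
    simp only [Finset.mem_filter, Finset.mem_univ, true_and]
    exact i.2
  · intro l _; exact Fin.ext rfl
  · intro i _; exact Fin.ext rfl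
  · intro l _; exact congrArg G (Fin.ext rfl)

lemma cnt_hd_eq (hrn : r ≤ n) (x : Slice n k) :
    cnt (hd hrn x) = ∑ l : Fin n, (if ((l:ℕ) < r ∧ x.1 l = true) then 1 else 0 : ℕ) := by
  rw [sum_split' hrn]
  have h1 : ∀ i : Fin r,
      (if (((Fin.castLE hrn i :Fin n):ℕ) < r ∧ x.1 (Fin.castLE hrn i) = true) then 1 else 0 : ℕ)
        = if x.1 (Fin.castLE hrn i) = true then 1 else 0 := by
    intro i
    have : ((Fin.castLE hrn i : Fin n):ℕ) < r := i.2
    simp [this]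
  have h2 : ∀ l ∈ Finset.univ.filter (fun l : Fin n => ¬ (l:ℕ) < r),
      (if ((l:ℕ) < r ∧ x.1 l = true) then 1 else 0 : ℕ) = 0 := by
    intro l hl
    have : ¬ (l:ℕ) < r := by simpa using hl
    simp [this]
  rw [Finset.sum_congr rfl (fun i _ => h1 i), Finset.sum_congr rfl h2]
  simp only [Finset.sum_const_zero, add_zero]; rfl

lemma cnt_hd_eq_of_cls {hrn : r ≤ n} {τ : Fin n → Bool} {x x₀ : Slice n k}
    (hx : x ∈ Cls r τ) (hx₀ : x₀ ∈ Cls r τ) :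
    cnt (hd hrn x) = cnt (hd hrn x₀) := by
  rw [cnt_hd_eq, cnt_hd_eq]
  exact head_count_eq r (tails_eq_of_mem hx hx₀)

lemma glf_count (hrn : r ≤ n) (x₀ : Slice n k) {y : Fin r → Bool}
    (hy : cnt y = cnt (hd hrn x₀)) :
    (∑ l : Fin n, (if glf x₀ y l then 1 else 0 : ℕ)) = k := by
  rw [sum_split' hrn]
  have h1 : ∀ i : Fin r, (if glf x₀ y (Fin.castLE hrn i) then 1 else 0 : ℕ)
      = if y i then 1 else 0 := by
    intro i
    have hi : ((Fin.castLE hrn i : Fin n) : ℕ) < r := i.2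
    have : glf x₀ y (Fin.castLE hrn i) = y i := by
      rw [glf, dif_pos hi]
      exact congrArg y (Fin.ext rfl)
    rw [this]
  have h2 : ∀ l ∈ Finset.univ.filter (fun l : Fin n => ¬ (l:ℕ) < r),
      (if glf x₀ y l then 1 else 0 : ℕ) = if x₀.1 l then 1 else 0 := by
    intro l hl
    have hnl : ¬ (l:ℕ) < r := by simpa using hl
    rw [glf, dif_neg hnl]
  rw [Finset.sum_congr rfl (fun i _ => h1 i), Finset.sum_congr rfl h2]
  have : (∑ i : Fin r, (if y i then 1 else 0 : ℕ)) = cnt y := rfl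
  rw [this, hy]
  have : cnt (hd hrn x₀) = ∑ i : Fin r, (if x₀.1 (Fin.castLE hrn i) then 1 else 0 : ℕ) := rfl
  rw [this, ← sum_split' hrn (fun l => if x₀.1 l then 1 else 0 : Fin n → ℕ)]
  exact x₀.2

def gl (hrn : r ≤ n) (x₀ : Slice n k) (y : Fin r → Bool) : Slice n k :=
  if h : cnt y = cnt (hd hrn x₀) then ⟨glf x₀ y, glf_count hrn x₀ h⟩ else x₀

lemma gl_coe (hrn : r ≤ n) (x₀ : Slice n k) {y : Fin r → Bool}
    (hy : cnt y = cnt (hd hrn x₀)) : (gl hrn x₀ y).1 = glf x₀ y := by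
  rw [gl, dif_pos hy]

lemma hd_gl (hrn : r ≤ n) (x₀ : Slice n k) {y : Fin r → Bool}
    (hy : cnt y = cnt (hd hrn x₀)) : hd hrn (gl hrn x₀ y) = y := by
  funext i
  rw [hd, gl_coe hrn x₀ hy, glf, dif_pos (show ((Fin.castLE hrn i : Fin n):ℕ) < r from i.2)]
  exact congrArg y (Fin.ext rfl)

lemma gl_hd {hrn : r ≤ n} {τ : Fin n → Bool} {x x₀ : Slice n k}
    (hx : x ∈ Cls r τ) (hx₀ : x₀ ∈ Cls r τ) :
    gl hrn x₀ (hd hrn x) = x := by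
  have hy : cnt (hd hrn x) = cnt (hd hrn x₀) := cnt_hd_eq_of_cls hx hx₀
  apply Subtype.ext
  rw [gl_coe hrn x₀ hy]
  funext l
  by_cases hl : (l:ℕ) < r
  · rw [glf, dif_pos hl]
    show x.1 (Fin.castLE hrn ⟨(l:ℕ), hl⟩) = x.1 l
    exact congrArg x.1 (Fin.ext rfl)
  · rw [glf, dif_neg hl]
    exact (tails_eq_of_mem hx hx₀ l (not_lt.mp hl)).symm

lemma gl_mem_cls {hrn : r ≤ n} {τ : Fin n → Bool} {x₀ : Slice n k}
    (hx₀ : x₀ ∈ Cls r τ) {y : Fin r → Bool} (hy : cnt y = cnt (hd hrn x₀)) :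
    gl hrn x₀ y ∈ Cls r τ := by
  refine Finset.mem_filter.mpr ⟨Finset.mem_univ _, ?_⟩
  have h0 : tl r x₀ = τ := (Finset.mem_filter.mp hx₀).2
  rw [← h0]
  funext l
  by_cases hl : r ≤ (l:ℕ)
  · rw [tl, tl, if_pos hl, if_pos hl, gl_coe hrn x₀ hy, glf, dif_neg (not_lt.mpr hl)]
  · rw [tl, tl, if_neg hl, if_neg hl]

lemma sum_cls_eq_sum_lvl (hrn : r ≤ n) {τ : Fin n → Bool} {x₀ : Slice n k}
    (hx₀ : x₀ ∈ Cls r τ) (F : Slice n k → ℝ) :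
    ∑ x ∈ Cls r τ, F x = ∑ y ∈ lvl r (cnt (hd hrn x₀)), F (gl hrn x₀ y) := by
  refine Finset.sum_bij' (fun x _ => hd hrn x) (fun y _ => gl hrn x₀ y) ?_ ?_ ?_ ?_ ?_
  · intro x hx
    exact mem_lvl.mpr (cnt_hd_eq_of_cls hx hx₀)
  · intro y hy
    exact gl_mem_cls hx₀ (mem_lvl.mp hy)
  · intro x hx
    exact gl_hd hx hx₀
  · intro y hy
    exact hd_gl hrn x₀ (mem_lvl.mp hy)
  · intro x hx
    rw [gl_hd hx hx₀]

lemma gl_swap (hrn : r ≤ n) (x₀ : Slice n k) (i j : Fin r) {y : Fin r → Bool}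
    (hy : cnt y = cnt (hd hrn x₀)) :
    gl hrn x₀ (y ∘ (Equiv.swap i j))
      = permAct (Equiv.swap (Fin.castLE hrn i) (Fin.castLE hrn j)) (gl hrn x₀ y) := by
  have hy' : cnt (y ∘ (Equiv.swap i j)) = cnt (hd hrn x₀) := by
    rw [cnt_comp_swap]; exact hy
  apply Subtype.ext
  rw [gl_coe hrn x₀ hy']
  funext l
  show glf x₀ (y ∘ (Equiv.swap i j)) l
      = (gl hrn x₀ y).1 ((Equiv.swap (Fin.castLE hrn i) (Fin.castLE hrn j)) l)
  rw [gl_coe hrn x₀ hy]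
  by_cases h1 : l = Fin.castLE hrn i
  · subst h1
    rw [Equiv.swap_apply_left]
    have hj : ((Fin.castLE hrn j : Fin n) : ℕ) < r := j.2
    have hi : ((Fin.castLE hrn i : Fin n) : ℕ) < r := i.2
    rw [glf, dif_pos hi, glf, dif_pos hj]
    have e1 : (⟨((Fin.castLE hrn j : Fin n) : ℕ), hj⟩ : Fin r) = j := Fin.ext rfl
    have e2 : (⟨((Fin.castLE hrn i : Fin n) : ℕ), hi⟩ : Fin r) = i := Fin.ext rfl
    rw [e1, e2]
    show y (Equiv.swap i j i) = y j
    rw [Equiv.swap_apply_left]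
  · by_cases h2 : l = Fin.castLE hrn j
    · subst h2
      rw [Equiv.swap_apply_right]
      have hj : ((Fin.castLE hrn j : Fin n) : ℕ) < r := j.2
      have hi : ((Fin.castLE hrn i : Fin n) : ℕ) < r := i.2
      rw [glf, dif_pos hj, glf, dif_pos hi]
      have e1 : (⟨((Fin.castLE hrn j : Fin n) : ℕ), hj⟩ : Fin r) = j := Fin.ext rfl
      have e2 : (⟨((Fin.castLE hrn i : Fin n) : ℕ), hi⟩ : Fin r) = i := Fin.ext rfl
      rw [e1, e2]
      show y (Equiv.swap i j j) = y i
      rw [Equiv.swap_apply_right]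
    · rw [Equiv.swap_apply_of_ne_of_ne h1 h2]
      by_cases hl : (l:ℕ) < r
      · rw [glf, dif_pos hl, glf, dif_pos hl]
        have hne1 : (⟨(l:ℕ), hl⟩ : Fin r) ≠ i := by
          intro h
          have hv : (l:ℕ) = (i:ℕ) := congrArg Fin.val h
          exact h1 (Fin.ext hv)
        have hne2 : (⟨(l:ℕ), hl⟩ : Fin r) ≠ j := by
          intro h
          have hv : (l:ℕ) = (j:ℕ) := congrArg Fin.val h
          exact h2 (Fin.ext hv)
        show y (Equiv.swap i j ⟨(l:ℕ), hl⟩) = y ⟨(l:ℕ), hl⟩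
        rw [Equiv.swap_apply_of_ne_of_ne hne1 hne2]
      · rw [glf, dif_neg hl, glf, dif_neg hl]

lemma pairs_reindex (hrn : r ≤ n) (S : Fin n → Fin n → ℝ) :
    (∑ i : Fin n, ∑ j : Fin n, if (i < j ∧ (j:ℕ) < r) then S i j else 0)
      = ∑ i' : Fin r, ∑ j' : Fin r,
          if i' < j' then S (Fin.castLE hrn i') (Fin.castLE hrn j') else 0 := by
  have e1 : (∑ i : Fin n, ∑ j : Fin n, if (i < j ∧ (j:ℕ) < r) then S i j else 0)
      = ∑ p ∈ ((Finset.univ : Finset (Fin n)) ×ˢ (Finset.univ : Finset (Fin n))).filter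
          (fun p => p.1 < p.2 ∧ ((p.2:ℕ) < r)), S p.1 p.2 := by
    rw [Finset.sum_filter, Finset.sum_product]
  have e2 : (∑ i' : Fin r, ∑ j' : Fin r,
        if i' < j' then S (Fin.castLE hrn i') (Fin.castLE hrn j') else 0)
      = ∑ q ∈ ((Finset.univ : Finset (Fin r)) ×ˢ (Finset.univ : Finset (Fin r))).filter
          (fun q => q.1 < q.2), S (Fin.castLE hrn q.1) (Fin.castLE hrn q.2) := by
    rw [Finset.sum_filter, Finset.sum_product]
  rw [e1, e2]
  refine Finset.sum_bij'
    (fun p hp => ((⟨(p.1:ℕ), ?_⟩ : Fin r), (⟨(p.2:ℕ), ?_⟩ : Fin r)))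
    (fun q _ => (Fin.castLE hrn q.1, Fin.castLE hrn q.2)) ?_ ?_ ?_ ?_ ?_
  · simp only [Finset.mem_filter] at hp
    exact lt_trans (by exact_mod_cast hp.2.1) hp.2.2
  · simp only [Finset.mem_filter] at hp
    exact hp.2.2
  · rintro ⟨i, j⟩ hp
    simp only [Finset.mem_filter, Finset.mem_product, Finset.mem_univ, and_self, true_and] at hp ⊢
    exact hp.1
  · rintro ⟨i', j'⟩ hq
    simp only [Finset.mem_filter, Finset.mem_product, Finset.mem_univ, and_self, true_and] at hq ⊢
    exact ⟨hq, j'.2⟩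
  · rintro ⟨i, j⟩ _
    exact Prod.ext (Fin.ext rfl) (Fin.ext rfl)
  · rintro ⟨i', j'⟩ _
    exact Prod.ext (Fin.ext rfl) (Fin.ext rfl)
  · rintro ⟨i, j⟩ _
    rfl


lemma perclass (m : ℕ) (hmn : m ≤ n) (g : Slice n k → ℝ) (τ : Fin n → Bool) :
    ((n - m : ℕ):ℝ) * ∑ x ∈ Cls (n - m) τ, (g x - slicePiT n k m g x)^2
      ≤ ∑ i : Fin n, ∑ j : Fin n,
          if (i < j ∧ (j:ℕ) < n - m) then (∑ x ∈ Cls (n - m) τ, (sliceD i j g x)^2) else 0 := by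
  rcases Finset.eq_empty_or_nonempty (Cls (n - m) τ : Finset (Slice n k)) with he | ⟨x₀, hx₀⟩
  · rw [he]
    simp
  · have hrn : n - m ≤ n := Nat.sub_le n m
    set F : Slice n k → ℝ := fun x => g x - slicePiT n k m g x with hF
    set u : (Fin (n - m) → Bool) → ℝ := fun y => F (gl hrn x₀ y) with hu'
    set a : ℕ := cnt (hd hrn x₀) with ha
    have hu : ∑ y ∈ lvl (n - m) a, u y = 0 := by
      rw [← sum_cls_eq_sum_lvl hrn hx₀ F, hF]
      rw [Finset.sum_sub_distrib, sum_piT_cls m hmn g τ, sub_self]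
    have hL : ∑ x ∈ Cls (n - m) τ, (g x - slicePiT n k m g x)^2
        = ∑ y ∈ lvl (n - m) a, (u y)^2 :=
      sum_cls_eq_sum_lvl hrn hx₀ (fun x => (F x)^2)
    rw [hL, pairs_reindex hrn]
    refine le_trans (core a u hu) (le_of_eq ?_)
    refine Finset.sum_congr rfl fun i' _ => Finset.sum_congr rfl fun j' _ => ?_
    by_cases hij : i' < j'
    · rw [if_pos hij, if_pos hij]
      rw [sum_cls_eq_sum_lvl hrn hx₀ (fun x => (sliceD (Fin.castLE hrn i') (Fin.castLE hrn j') g x)^2)]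
      refine Finset.sum_congr rfl fun y hy => ?_
      have hya : cnt y = a := mem_lvl.mp hy
      have hya' : cnt (y ∘ (Equiv.swap i' j')) = a := by rw [cnt_comp_swap]; exact hya
      have hpi : slicePiT n k m g (gl hrn x₀ (y ∘ (Equiv.swap i' j')))
          = slicePiT n k m g (gl hrn x₀ y) :=
        piT_const_on_cls m g (gl_mem_cls hx₀ hya') (gl_mem_cls hx₀ hya)
      have hD : u (y ∘ (Equiv.swap i' j')) - u y
          = sliceD (Fin.castLE hrn i') (Fin.castLE hrn j') g (gl hrn x₀ y) := by
        rw [hu', hF]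
        simp only
        rw [hpi, sliceD, ← gl_swap hrn x₀ i' j' hya]
        ring
      rw [hD]
    · rw [if_neg hij, if_neg hij]


end S8

open S8

/-- Let `0 < k < n` and `1 ≤ m < n`. For every function `f` on the slice
`([n] choose k)` and every `t ≥ 0`,
`‖H_t f − Π_T H_t f‖²_{L²} ≤ (1/(n−m)) Σ_{1 ≤ i < j ≤ n−m} ‖D_{τ_{ij}}(H_t f)‖²_{L²}`,
where all norms are with respect to the uniform measure on the slice. (In the `0`-based
indexing of `Fin n`, the condition `1 ≤ i < j ≤ n−m` becomes `i < j` and `(j : ℕ) < n−m`.) -/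
theorem stmt8 (n k m : ℕ) (hk0 : 0 < k) (hkn : k < n) (hm1 : 1 ≤ m) (hmn : m < n)
    (f : Slice n k → ℝ) (t : ℝ) (ht : 0 ≤ t) :
    sliceL2sq (fun x => sliceH n k t f x - slicePiT n k m (sliceH n k t f) x) ≤
      ((n - m : ℕ) : ℝ)⁻¹ *
        ∑ i : Fin n, ∑ j : Fin n,
          if i < j ∧ (j : ℕ) < n - m then sliceL2sq (sliceD i j (sliceH n k t f)) else 0 := by
  classical
  set g : Slice n k → ℝ := sliceH n k t f with hg
  set F : Slice n k → ℝ := fun x => g x - slicePiT n k m g x with hF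
  have hfib : ∀ G : Slice n k → ℝ,
      (∑ τ : Fin n → Bool, ∑ x ∈ Cls (n - m) τ, G x) = ∑ x : Slice n k, G x := by
    intro G
    exact Finset.sum_fiberwise_of_maps_to (fun x _ => Finset.mem_univ (tl (n - m) x)) G
  have MAIN : ((n - m : ℕ):ℝ) * ∑ x : Slice n k, (F x)^2
      ≤ ∑ i : Fin n, ∑ j : Fin n,
          if (i < j ∧ (j:ℕ) < n - m) then (∑ x : Slice n k, (sliceD i j g x)^2) else 0 := by
    rw [← hfib (fun x => (F x)^2), Finset.mul_sum]
    have hR : (∑ i : Fin n, ∑ j : Fin n,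
        if (i < j ∧ (j:ℕ) < n - m) then (∑ x : Slice n k, (sliceD i j g x)^2) else 0)
        = ∑ τ : Fin n → Bool, ∑ i : Fin n, ∑ j : Fin n,
            if (i < j ∧ (j:ℕ) < n - m) then (∑ x ∈ Cls (n - m) τ, (sliceD i j g x)^2) else 0 := by
      have h1 : ∀ i j : Fin n, (if (i < j ∧ (j:ℕ) < n - m)
            then (∑ x : Slice n k, (sliceD i j g x)^2) else 0)
          = ∑ τ : Fin n → Bool, (if (i < j ∧ (j:ℕ) < n - m)
            then (∑ x ∈ Cls (n - m) τ, (sliceD i j g x)^2) else 0) := by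
        intro i j
        by_cases hc : (i < j ∧ (j:ℕ) < n - m)
        · rw [if_pos hc, ← hfib (fun x => (sliceD i j g x)^2)]
          exact Finset.sum_congr rfl fun τ _ => (if_pos hc).symm
        · rw [if_neg hc]
          exact (Finset.sum_eq_zero fun τ _ => if_neg hc).symm
      simp only [h1]
      exact (Finset.sum_congr rfl (fun i _ => Finset.sum_comm)).trans Finset.sum_comm
    rw [hR]
    exact Finset.sum_le_sum fun τ _ => perclass m (le_of_lt hmn) g τ
  have hRpos : (0:ℝ) < ((n - m : ℕ):ℝ) := by
    have : 0 < n - m := by omega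
    exact_mod_cast this
  have hNnn : (0:ℝ) ≤ ((Fintype.card (Slice n k) : ℝ))⁻¹ := by positivity
  rw [sliceL2sq]
  have hRHS : (∑ i : Fin n, ∑ j : Fin n,
        if i < j ∧ (j : ℕ) < n - m then sliceL2sq (sliceD i j g) else 0)
      = ((Fintype.card (Slice n k) : ℝ))⁻¹ *
        (∑ i : Fin n, ∑ j : Fin n,
          if (i < j ∧ (j:ℕ) < n - m) then (∑ x : Slice n k, (sliceD i j g x)^2) else 0) := by
    rw [Finset.mul_sum]
    refine Finset.sum_congr rfl fun i _ => ?_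
    rw [Finset.mul_sum]
    refine Finset.sum_congr rfl fun j _ => ?_
    by_cases hc : (i < j ∧ (j:ℕ) < n - m)
    · rw [if_pos hc, if_pos hc, sliceL2sq]
    · rw [if_neg hc, if_neg hc, mul_zero]
  rw [hRHS]
  have h2 : (∑ x : Slice n k, (F x)^2)
      ≤ ((n - m : ℕ) : ℝ)⁻¹ * (∑ i : Fin n, ∑ j : Fin n,
          if (i < j ∧ (j:ℕ) < n - m) then (∑ x : Slice n k, (sliceD i j g x)^2) else 0) := by
    have h3 := mul_le_mul_of_nonneg_left MAIN (le_of_lt (inv_pos.mpr hRpos))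
    rwa [← mul_assoc, inv_mul_cancel₀ (ne_of_gt hRpos), one_mul] at h3
  calc (Fintype.card (Slice n k) : ℝ)⁻¹ * ∑ x : Slice n k, (F x)^2
      ≤ (Fintype.card (Slice n k) : ℝ)⁻¹ * (((n - m : ℕ) : ℝ)⁻¹ *
        (∑ i : Fin n, ∑ j : Fin n,
          if (i < j ∧ (j:ℕ) < n - m) then (∑ x : Slice n k, (sliceD i j g x)^2) else 0)) :=
        mul_le_mul_of_nonneg_left h2 hNnn
    _ = _ := by ring
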